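/- Let k ≥ 2 and let B be a non-derogative matrix of order 4k over the field 𝔽₂ with two elements. Then B can be written as B = N + D where N, D are matrices of order 4k over 𝔽₂ with N² = 0 and D⁴ = D. -/

import Mathlib

open Polynomial

/-- `D` is diagonalizable with all eigenvalues (diagonal entries) lying in `S`. -/
def DiagWith {F : Type*} [Field F] {n : ℕ}
    (D : Matrix (Fin n) (Fin n) F) (S : Set F) : Prop :=
  ∃ (U : (Matrix (Fin n) (Fin n) F)ˣ) (d : Fin n → F),
    (∀ i, d i ∈ S) ∧
    D = (U : Matrix (Fin n) (Fin n) F) * Matrix.diagonal d *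
        ((↑U⁻¹ : Matrix (Fin n) (Fin n) F))

/-- A square matrix is non-derogative if its characteristic polynomial equals
its minimal polynomial. -/
def Nonderogative {F : Type*} [Field F] {n : ℕ}
    (B : Matrix (Fin n) (Fin n) F) : Prop :=
  B.charpoly = minpoly F B

section Realize

variable {F : Type*} [Field F] {V : Type*} [AddCommGroup V] [Module F V]

private def annI (f : Module.End F V) (w : V) : Ideal F[X] where
  carrier := {h | aeval f h w = 0}
  add_mem' := by
    intro a b ha hb
    simp only [Set.mem_setOf_eq, map_add, LinearMap.add_apply] at *
    rw [ha, hb, add_zero]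
  zero_mem' := by simp
  smul_mem' := by
    intro r h hh
    simp only [Set.mem_setOf_eq, smul_eq_mul, map_mul, Module.End.mul_apply] at *
    rw [hh, map_zero]

private lemma annI_dvd (f : Module.End F V) (w : V) :
    ∃ q : F[X], ∀ h, (aeval f h w = 0 ↔ q ∣ h) := by
  refine ⟨Submodule.IsPrincipal.generator (annI f w), fun h => ?_⟩
  have h2 : annI f w = Ideal.span {Submodule.IsPrincipal.generator (annI f w)} :=
    (Submodule.IsPrincipal.span_singleton_generator (annI f w)).symm
  constructor
  · intro hh
    have hmem : h ∈ annI f w := hh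
    rw [h2] at hmem
    exact Ideal.mem_span_singleton.mp hmem
  · intro hh
    have hmem : h ∈ Ideal.span {Submodule.IsPrincipal.generator (annI f w)} :=
      Ideal.mem_span_singleton.mpr hh
    rw [← h2] at hmem
    exact hmem

private lemma realize [FiniteDimensional F V] (f : Module.End F V) :
    ∀ g : F[X], g ∣ minpoly F f → ∃ v : V, ∀ h, (aeval f h v = 0 ↔ g ∣ h) := by
  have hint : IsIntegral F f := (Module.End.isIntegral (R := F) (M := V)).isIntegral f
  have hμ0 : minpoly F f ≠ 0 := minpoly.ne_zero hint
  suffices H : ∀ d : ℕ, ∀ g : F[X], g.natDegree ≤ d → g ∣ minpoly F f →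
      ∃ v : V, ∀ h, (aeval f h v = 0 ↔ g ∣ h) by
    exact fun g hg => H g.natDegree g le_rfl hg
  intro d
  induction d with
  | zero =>
    intro g hdeg hdvd
    have hg0 : g ≠ 0 := fun h => hμ0 (by simpa [h] using hdvd)
    have hu : IsUnit g := by
      obtain ⟨x, hx⟩ := natDegree_eq_zero.mp (Nat.le_zero.mp hdeg)
      rw [← hx] at hg0 ⊢
      exact isUnit_C.mpr (isUnit_iff_ne_zero.mpr (fun h => hg0 (by rw [h, map_zero])))
    exact ⟨0, fun h => by simp [hu.dvd]⟩
  | succ d ih =>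
    intro g hdeg hdvd
    by_cases hu : IsUnit g
    · exact ⟨0, fun h => by simp [hu.dvd]⟩
    have hg0 : g ≠ 0 := fun h => hμ0 (by simpa [h] using hdvd)
    obtain ⟨p, hp_irr, hpg⟩ := WfDvdMonoid.exists_irreducible_factor hu hg0
    have hpprime : Prime p := hp_irr.prime
    obtain ⟨E, M, hpM, hμ⟩ := WfDvdMonoid.max_power_factor hμ0 hp_irr
    obtain ⟨e, r, hpr, hg⟩ := WfDvdMonoid.max_power_factor hg0 hp_irr
    have hr0 : r ≠ 0 := fun h => hg0 (by rw [hg, h, mul_zero])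
    have hM0 : M ≠ 0 := fun h => hμ0 (by rw [hμ, h, mul_zero])
    have hp0 : p ≠ 0 := hpprime.ne_zero
    have he : 1 ≤ e := by
      rcases Nat.eq_zero_or_pos e with h0 | h1
      · exact absurd (by rw [hg, h0, pow_zero, one_mul] at hpg; exact hpg) hpr
      · exact h1
    have hE : 1 ≤ E := by
      rcases Nat.eq_zero_or_pos E with h0 | h1
      · exfalso
        apply hpM
        have : p ∣ minpoly F f := hpg.trans hdvd
        rwa [hμ, h0, pow_zero, one_mul] at this
      · exact h1
    have heE : e ≤ E := by
      by_contra hc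
      push_neg at hc
      have h1 : p ^ (E + 1) ∣ minpoly F f := by
        refine dvd_trans ?_ hdvd
        rw [hg]
        exact Dvd.dvd.mul_right (pow_dvd_pow p (by omega)) r
      rw [hμ] at h1
      have h2 : p ^ E * p ∣ p ^ E * M := by rw [pow_succ] at h1; exact h1
      exact hpM ((mul_dvd_mul_iff_left (pow_ne_zero E hp0)).mp h2)
    -- the vector w with large p-order
    have hμ' : aeval f (p ^ (E - 1) * M) ≠ 0 := by
      intro h0
      have hdvd' : minpoly F f ∣ p ^ (E - 1) * M := minpoly.dvd F f h0
      have hne : p ^ (E - 1) * M ≠ 0 := mul_ne_zero (pow_ne_zero _ hp0) hM0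
      have hle := natDegree_le_of_dvd hdvd' hne
      have heq : minpoly F f = p * (p ^ (E - 1) * M) := by
        rw [hμ, ← mul_assoc, ← pow_succ']
        congr 2
        omega
      rw [heq, natDegree_mul hp0 hne] at hle
      have := hp_irr.natDegree_pos
      omega
    obtain ⟨w, hw⟩ : ∃ w : V, aeval f (p ^ (E - 1) * M) w ≠ 0 := by
      by_contra hc
      push_neg at hc
      exact hμ' (LinearMap.ext hc)
    obtain ⟨q, hq⟩ := annI_dvd f w
    have hqμ : q ∣ minpoly F f := (hq _).mp (by rw [minpoly.aeval]; rfl)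
    have hpEq : p ^ E ∣ q := by
      obtain ⟨u, s, hus1, hus2, hq_eq⟩ := exists_dvd_and_dvd_of_dvd_mul (hμ ▸ hqμ)
      obtain ⟨i, hiE, hui⟩ := (dvd_prime_pow hpprime E).mp hus1
      rcases Nat.lt_or_ge i E with hiE' | hiE'
      · exfalso
        apply hw
        refine (hq _).mpr ?_
        rw [hq_eq]
        exact mul_dvd_mul (hui.dvd.trans (pow_dvd_pow p (by omega))) hus2
      · have hiEeq : i = E := le_antisymm hiE hiE'
        rw [hq_eq]
        exact dvd_mul_of_dvd_left (hiEeq ▸ hui.symm.dvd) s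
    have hcopM : IsCoprime (p ^ e) M := (hp_irr.coprime_iff_not_dvd.mpr hpM).pow_left
    set v₁ := aeval f (p ^ (E - e) * M) w with hv₁def
    have hv₁ : ∀ h, aeval f h v₁ = 0 ↔ p ^ e ∣ h := by
      intro h
      have hrw : aeval f h v₁ = aeval f (h * (p ^ (E - e) * M)) w := by
        rw [map_mul, Module.End.mul_apply]
      rw [hrw, hq]
      constructor
      · intro hd
        have h1 : p ^ E ∣ h * (p ^ (E - e) * M) := hpEq.trans hd
        have h2 : p ^ e * p ^ (E - e) ∣ (h * M) * p ^ (E - e) := by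
          rw [← pow_add]
          have hee : e + (E - e) = E := by omega
          rw [hee]
          refine h1.trans (dvd_of_eq (by ring))
        have h3 : p ^ e ∣ h * M :=
          (mul_dvd_mul_iff_right (pow_ne_zero _ hp0)).mp h2
        exact hcopM.dvd_of_dvd_mul_right h3
      · rintro ⟨t, ht⟩
        refine hqμ.trans ⟨t, ?_⟩
        have hee : p ^ e * p ^ (E - e) = p ^ E := by
          rw [← pow_add]; congr 1; omega
        rw [ht, hμ, ← hee]; ring
    by_cases hru : IsUnit r
    · refine ⟨v₁, fun h => (hv₁ h).trans ?_⟩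
      have hassoc : Associated (p ^ e) g := by
        rw [hg]
        exact associated_mul_unit_right _ r hru
      exact hassoc.dvd_iff_dvd_left
    · have hgdeg : g.natDegree = e * p.natDegree + r.natDegree := by
        rw [hg, natDegree_mul (pow_ne_zero _ hp0) hr0, natDegree_pow, mul_comm e _]
      have hp1 := hp_irr.natDegree_pos
      have h11 : 1 * 1 ≤ e * p.natDegree := Nat.mul_le_mul he hp1
      have hrd : r.natDegree ≤ d := by omega
      obtain ⟨v₂, hv₂⟩ := ih r hrd (dvd_trans ⟨p ^ e, by rw [hg]; ring⟩ hdvd)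
      have hcop : IsCoprime (p ^ e) r := (hp_irr.coprime_iff_not_dvd.mpr hpr).pow_left
      refine ⟨v₁ + v₂, fun h => ?_⟩
      constructor
      · intro h0
        have hA : aeval f (h * r) v₁ = 0 := by
          have hsum : aeval f (h * r) (v₁ + v₂) = 0 := by
            rw [mul_comm, map_mul, Module.End.mul_apply, h0, map_zero]
          have h2 : aeval f (h * r) v₂ = 0 := (hv₂ _).mpr (dvd_mul_left r h)
          rw [map_add, h2, add_zero] at hsum
          exact hsum
        have hB : aeval f (h * p ^ e) v₂ = 0 := by
          have hsum : aeval f (h * p ^ e) (v₁ + v₂) = 0 := by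
            rw [mul_comm, map_mul, Module.End.mul_apply, h0, map_zero]
          have h2 : aeval f (h * p ^ e) v₁ = 0 := (hv₁ _).mpr (dvd_mul_left _ h)
          rw [map_add, h2, zero_add] at hsum
          exact hsum
        have hpe : p ^ e ∣ h := hcop.dvd_of_dvd_mul_right ((hv₁ _).mp hA)
        have hre : r ∣ h := hcop.symm.dvd_of_dvd_mul_right ((hv₂ _).mp hB)
        rw [hg]
        exact hcop.mul_dvd hpe hre
      · intro hd
        rw [hg] at hd
        have h1 : aeval f h v₁ = 0 := (hv₁ h).mpr ((dvd_mul_right _ _).trans hd)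
        have h2 : aeval f h v₂ = 0 := (hv₂ h).mpr ((dvd_mul_left _ _).trans hd)
        rw [map_add, h1, h2, add_zero]

lemma exists_max_order_vector [FiniteDimensional F V] (f : Module.End F V) :
    ∃ v : V, ∀ h : F[X], (aeval f h v = 0 ↔ minpoly F f ∣ h) :=
  realize f (minpoly F f) dvd_rfl

end Realize

section Cyclic

variable {F : Type*} [Field F] {V : Type*} [AddCommGroup V] [Module F V]

lemma exists_cyclic_basis [FiniteDimensional F V] (f : Module.End F V) {n : ℕ}
    (hn : 0 < n) (hdim : Module.finrank F V = n)
    (hdeg : (minpoly F f).natDegree = n) :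
    ∃ b : Module.Basis (Fin n) F V, ∀ (i : Fin n) (h : i.val + 1 < n),
      f (b i) = b ⟨i.val + 1, h⟩ := by
  obtain ⟨v, hv⟩ := exists_max_order_vector f
  have hμ0 : minpoly F f ≠ 0 := by
    intro h
    rw [h] at hdeg
    simp at hdeg
    omega
  have li : LinearIndependent F (fun i : Fin n => (f ^ (i : ℕ)) v) := by
    rw [Fintype.linearIndependent_iff]
    intro c hc i0
    set q : F[X] := ∑ i : Fin n, C (c i) * X ^ (i : ℕ) with hqdef
    have hqv : aeval f q v = 0 := by
      rw [hqdef, map_sum, LinearMap.sum_apply]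
      rw [← hc]
      refine Finset.sum_congr rfl (fun i _ => ?_)
      rw [map_mul, aeval_C, aeval_X_pow, Module.End.mul_apply,
        Module.algebraMap_end_apply]
    have hqdvd : minpoly F f ∣ q := (hv q).mp hqv
    have hqdeg : q.natDegree < n := by
      have h1 : q.natDegree ≤ n - 1 := by
        refine (natDegree_sum_le _ _).trans ?_
        rw [Finset.fold_max_le]
        constructor
        · omega
        · intro i _
          refine (natDegree_mul_le).trans ?_
          simp only [natDegree_C, natDegree_X_pow, Function.comp]
          omega
      omega
    have hq0 : q = 0 := by
      by_contra hq0
      have := natDegree_le_of_dvd hqdvd hq0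
      omega
    have : q.coeff (i0 : ℕ) = c i0 := by
      rw [hqdef, finset_sum_coeff]
      rw [Finset.sum_eq_single i0]
      · rw [coeff_C_mul, coeff_X_pow, if_pos rfl, mul_one]
      · intro j _ hji
        rw [coeff_C_mul, coeff_X_pow, if_neg, mul_zero]
        intro hji'
        exact hji (Fin.ext (by omega))
      · intro hmem
        exact absurd (Finset.mem_univ i0) hmem
    rw [hq0, coeff_zero] at this
    exact this.symm
  have hcard : Fintype.card (Fin n) = Module.finrank F V := by
    rw [Fintype.card_fin, hdim]
  have : Nonempty (Fin n) := ⟨⟨0, hn⟩⟩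
  refine ⟨basisOfLinearIndependentOfCardEqFinrank li hcard, fun i h => ?_⟩
  rw [coe_basisOfLinearIndependentOfCardEqFinrank]
  show f ((f ^ (i : ℕ)) v) = (f ^ (((i : ℕ) + 1))) v
  rw [pow_succ', Module.End.mul_apply]

end Cyclic

lemma construction {k : ℕ} (hk : 2 ≤ k) {V : Type*} [AddCommGroup V]
    [Module (ZMod 2) V] {n : ℕ} (hn : n = 4 * k)
    (f : Module.End (ZMod 2) V) (b : Module.Basis (Fin n) (ZMod 2) V)
    (hb : ∀ (i : Fin n) (h : i.val + 1 < n), f (b i) = b ⟨i.val + 1, h⟩) :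
    ∃ N D : Module.End (ZMod 2) V, f = N + D ∧ N ^ 2 = 0 ∧ D ^ 4 = D := by
  have hn8 : 8 ≤ n := by omega
  have haa : ∀ x : V, x + x = 0 := by
    intro x
    have h2 : (2 : ZMod 2) • x = x + x := two_smul _ x
    rw [← h2, (by decide : (2 : ZMod 2) = 0), zero_smul]
  have hsub : ∀ x y : V, x - y = x + y := by
    intro x y
    rw [sub_eq_add_neg, neg_eq_of_add_eq_zero_left (haa y)]
  set c : ℕ → V := fun m => if h : m < n then b ⟨m, h⟩ else 0 with hcdef
  have hc : ∀ (m : ℕ) (h : m < n), c m = b ⟨m, h⟩ := fun m h => dif_pos h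
  set a : ℕ → ZMod 2 := fun m =>
    if h : m < n then b.repr (f (b ⟨n - 1, by omega⟩)) ⟨m, h⟩ else 0 with hadef
  have ha : ∀ (m : ℕ) (h : m < n),
      a m = b.repr (f (b ⟨n - 1, by omega⟩)) ⟨m, h⟩ := fun m h => dif_pos h
  have hfc : ∀ m : ℕ, m + 1 < n → f (c m) = c (m + 1) := by
    intro m h
    rw [hc m (by omega), hc (m + 1) h]
    exact hb ⟨m, by omega⟩ h
  have hflast : f (c (n - 1)) = ∑ j : Fin n, a j.val • c j.val := by
    rw [hc (n - 1) (by omega)]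
    conv_lhs => rw [← Module.Basis.sum_repr b (f (b ⟨n - 1, by omega⟩))]
    refine Finset.sum_congr rfl (fun j _ => ?_)
    rw [ha j.val j.isLt, hc j.val j.isLt]
  -- case split on the top coefficient
  by_cases haz : a (n - 1) = 0
  -- ==================== CASE A ====================
  · set wt : Fin n → V := fun j =>
      if j.val % 4 = 0 then
        (if j.val = 0 then a 0 • c 0 else a j.val • (c (j.val - 3) + c j.val))
      else 0 with hwtdef
    set w : V := ∑ j : Fin n, wt j with hwdef
    set D : Module.End (ZMod 2) V := (b.constr (ZMod 2)) (fun i : Fin n =>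
      (fun m : ℕ => if m = 0 then 0 else if m = n - 1 then c (n - 3) + w
        else if m % 4 = 0 then c (m - 2) else c (m + 1)) i.val) with hDdef
    have hDc : ∀ (m : ℕ) (h : m < n), D (c m) =
        (if m = 0 then 0 else if m = n - 1 then c (n - 3) + w
          else if m % 4 = 0 then c (m - 2) else c (m + 1)) := by
      intro m h
      rw [hc m h, hDdef]
      exact b.constr_basis (ZMod 2) _ ⟨m, h⟩
    have hD0 : D (c 0) = 0 := by rw [hDc 0 (by omega), if_pos rfl]
    have hDlast : D (c (n - 1)) = c (n - 3) + w := by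
      rw [hDc (n - 1) (by omega), if_neg (by omega), if_pos rfl]
    have hDe : ∀ m : ℕ, m % 4 = 0 → m ≠ 0 → m < n → D (c m) = c (m - 2) := by
      intro m h1 h2 h3
      rw [hDc m h3, if_neg h2, if_neg (by omega), if_pos h1]
    have hDi : ∀ m : ℕ, m % 4 ≠ 0 → m ≠ n - 1 → m < n → D (c m) = c (m + 1) := by
      intro m h1 h2 h3
      rw [hDc m h3, if_neg (by omega), if_neg h2, if_neg h1]
    have hDw : D w = 0 := by
      rw [hwdef, map_sum]
      refine Finset.sum_eq_zero (fun j _ => ?_)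
      rw [hwtdef]
      by_cases hj4 : j.val % 4 = 0
      · by_cases hj0 : j.val = 0
        · simp only [if_pos hj4, if_pos hj0, map_smul]
          rw [hD0, smul_zero]
        · simp only [if_pos hj4, if_neg hj0, map_smul, map_add]
          have hjn : j.val < n := j.isLt
          rw [hDi (j.val - 3) (by omega) (by omega) (by omega),
            hDe j.val hj4 hj0 hjn]
          have : j.val - 3 + 1 = j.val - 2 := by omega
          rw [this, haa, smul_zero]
      · simp only [if_neg hj4, map_zero]
    set N : Module.End (ZMod 2) V := f - D with hNdef
    have hNapp : ∀ x : V, N x = f x - D x := fun x => LinearMap.sub_apply f D x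
    have hN0 : ∀ m : ℕ, m < n - 1 → m % 4 ≠ 0 → N (c m) = 0 := by
      intro m h1 h2
      rw [hNapp, hfc m (by omega), hDi m h2 (by omega) (by omega), sub_self]
    have hNz : N (c 0) = c 1 := by
      rw [hNapp, hfc 0 (by omega), hD0, sub_zero]
    have hNe : ∀ m : ℕ, m % 4 = 0 → m ≠ 0 → m < n →
        N (c m) = c (m + 1) + c (m - 2) := by
      intro m h1 h2 h3
      rw [hNapp, hfc m (by omega), hDe m h1 h2 h3, hsub]
    have hNlast : N (c (n - 1)) =
        (∑ j : Fin n, a j.val • c j.val) + (c (n - 3) + w) := by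
      rw [hNapp, hflast, hDlast, hsub]
    refine ⟨N, D, by rw [hNdef, sub_add_cancel], ?_, ?_⟩
    -- N ^ 2 = 0
    · refine b.ext (fun i => ?_)
      obtain ⟨m, hm⟩ := i
      rw [← hc m hm, pow_two, Module.End.mul_apply, LinearMap.zero_apply]
      by_cases hm0 : m = 0
      · rw [hm0, hNz, hN0 1 (by omega) (by omega)]
      · by_cases hm4 : m % 4 = 0
        · rw [hNe m hm4 hm0 hm, map_add, hN0 (m + 1) (by omega) (by omega),
            hN0 (m - 2) (by omega) (by omega), add_zero]
        · by_cases hml : m = n - 1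
          · rw [hml, hNlast, map_add, map_add, map_sum,
              hN0 (n - 3) (by omega) (by omega), hwdef, map_sum, zero_add,
              ← Finset.sum_add_distrib]
            refine Finset.sum_eq_zero (fun j _ => ?_)
            rw [map_smul, hwtdef]
            by_cases hj4 : j.val % 4 = 0
            · by_cases hj0 : j.val = 0
              · simp only [if_pos hj4, if_pos hj0, map_smul]
                rw [hj0, hNz, haa]
              · simp only [if_pos hj4, if_neg hj0, map_smul, map_add]
                rw [hN0 (j.val - 3) (by omega) (by omega),
                  hNe j.val hj4 hj0 j.isLt, zero_add, haa]
            · simp only [if_neg hj4, map_zero, add_zero]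
              by_cases hjl : j.val = n - 1
              · rw [hjl, haz, zero_smul]
              · rw [hN0 j.val (by omega) hj4, smul_zero]
          · rw [hN0 m (by omega) hm4, map_zero]
    -- D ^ 4 = D
    · have hD4 : ∀ x : V, (D ^ 4) x = D (D (D (D x))) := by
        intro x
        rw [pow_succ, pow_succ, pow_succ, pow_one]
        simp only [Module.End.mul_apply]
      refine b.ext (fun i => ?_)
      obtain ⟨m, hm⟩ := i
      rw [← hc m hm, hD4]
      by_cases hm0 : m = 0
      · rw [hm0, hD0, map_zero, map_zero, map_zero]
      · by_cases hml : m = n - 1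
        · rw [hml, hDlast, map_add, hDw, add_zero,
            hDi (n - 3) (by omega) (by omega) (by omega),
            (by omega : n - 3 + 1 = n - 2),
            hDi (n - 2) (by omega) (by omega) (by omega),
            (by omega : n - 2 + 1 = n - 1), hDlast]
        · by_cases hml2 : m = n - 2
          · rw [hml2, hDi (n - 2) (by omega) (by omega) (by omega),
              (by omega : n - 2 + 1 = n - 1), hDlast, map_add, hDw, add_zero,
              hDi (n - 3) (by omega) (by omega) (by omega),
              (by omega : n - 3 + 1 = n - 2),
              hDi (n - 2) (by omega) (by omega) (by omega),
              (by omega : n - 2 + 1 = n - 1)]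
          · by_cases hm4 : m % 4 = 0
            -- m % 4 = 0, m ≠ 0 : m ≤ n - 4
            · rw [hDe m hm4 hm0 hm,
                hDi (m - 2) (by omega) (by omega) (by omega),
                (by omega : m - 2 + 1 = m - 1),
                hDi (m - 1) (by omega) (by omega) (by omega),
                (by omega : m - 1 + 1 = m),
                hDe m hm4 hm0 hm]
            · by_cases hm41 : m % 4 = 1
              · by_cases hml3 : m = n - 3
                · rw [hml3, hDi (n - 3) (by omega) (by omega) (by omega),
                    (by omega : n - 3 + 1 = n - 2),
                    hDi (n - 2) (by omega) (by omega) (by omega),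
                    (by omega : n - 2 + 1 = n - 1),
                    hDlast, map_add, hDw, add_zero,
                    hDi (n - 3) (by omega) (by omega) (by omega),
                    (by omega : n - 3 + 1 = n - 2)]
                -- m % 4 = 1, m ≤ n - 7
                · rw [hDi m (by omega) (by omega) hm,
                    hDi (m + 1) (by omega) (by omega) (by omega),
                    (by omega : m + 1 + 1 = m + 2),
                    hDi (m + 2) (by omega) (by omega) (by omega),
                    (by omega : m + 2 + 1 = m + 3),
                    hDe (m + 3) (by omega) (by omega) (by omega),
                    (by omega : m + 3 - 2 = m + 1)]
              · by_cases hm42 : m % 4 = 2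
                -- m % 4 = 2, m ≤ n - 6 (since m ≠ n - 2)
                · rw [hDi m (by omega) (by omega) hm,
                    hDi (m + 1) (by omega) (by omega) (by omega),
                    (by omega : m + 1 + 1 = m + 2),
                    hDe (m + 2) (by omega) (by omega) (by omega),
                    (by omega : m + 2 - 2 = m),
                    hDi m (by omega) (by omega) hm]
                -- m % 4 = 3, m ≤ n - 5 (since m ≠ n - 1)
                · rw [hDi m (by omega) (by omega) hm,
                    hDe (m + 1) (by omega) (by omega) (by omega),
                    (by omega : m + 1 - 2 = m - 1),
                    hDi (m - 1) (by omega) (by omega) (by omega),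
                    (by omega : m - 1 + 1 = m),
                    hDi m (by omega) (by omega) hm]
  -- ==================== CASE B ====================
  · set wt : Fin n → V := fun j =>
      if (j.val = 2 ∨ j.val = 5 ∨ (9 ≤ j.val ∧ j.val % 4 = 1)) then
        a j.val • (c (j.val - 2) + c (j.val - 1) + c j.val)
      else 0 with hwtdef
    set w : V := ∑ j : Fin n, wt j with hwdef
    set D : Module.End (ZMod 2) V := (b.constr (ZMod 2)) (fun i : Fin n =>
      (fun m : ℕ => if m = 2 then c 0 else if m = 5 then c 3
        else if m = n - 1 then c (n - 2) + c (n - 1) + w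
        else if 6 ≤ m ∧ m % 4 = 1 then c (m - 2) else c (m + 1)) i.val) with hDdef
    have hDc : ∀ (m : ℕ) (h : m < n), D (c m) =
        (if m = 2 then c 0 else if m = 5 then c 3
          else if m = n - 1 then c (n - 2) + c (n - 1) + w
          else if 6 ≤ m ∧ m % 4 = 1 then c (m - 2) else c (m + 1)) := by
      intro m h
      rw [hc m h, hDdef]
      exact b.constr_basis (ZMod 2) _ ⟨m, h⟩
    have hD2 : D (c 2) = c 0 := by rw [hDc 2 (by omega), if_pos rfl]
    have hD5 : D (c 5) = c 3 := by
      rw [hDc 5 (by omega), if_neg (by omega), if_pos rfl]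
    have hDlast : D (c (n - 1)) = c (n - 2) + c (n - 1) + w := by
      rw [hDc (n - 1) (by omega), if_neg (by omega), if_neg (by omega), if_pos rfl]
    have hDe : ∀ m : ℕ, 9 ≤ m → m % 4 = 1 → m < n → D (c m) = c (m - 2) := by
      intro m h1 h2 h3
      rw [hDc m h3, if_neg (by omega), if_neg (by omega), if_neg (by omega),
        if_pos (by omega)]
    have hDi : ∀ m : ℕ, m < n → m ≠ 2 → m ≠ 5 → m ≠ n - 1 →
        ¬(6 ≤ m ∧ m % 4 = 1) → D (c m) = c (m + 1) := by
      intro m h0 h1 h2 h3 h4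
      rw [hDc m h0, if_neg h1, if_neg h2, if_neg h3, if_neg h4]
    have hDw : D w = w := by
      rw [hwdef, map_sum]
      refine Finset.sum_congr rfl (fun j _ => ?_)
      rw [hwtdef]
      by_cases hcond : (j.val = 2 ∨ j.val = 5 ∨ (9 ≤ j.val ∧ j.val % 4 = 1))
      · simp only [if_pos hcond, map_smul, map_add]
        rcases hcond with hj | hj | hj
        · rw [hj, (show (2:ℕ) - 2 = 0 from rfl), (show (2:ℕ) - 1 = 1 from rfl),
            hDi 0 (by omega) (by omega) (by omega) (by omega) (by omega),
            hDi 1 (by omega) (by omega) (by omega) (by omega) (by omega),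
            (show (0:ℕ) + 1 = 1 from rfl), (show (1:ℕ) + 1 = 2 from rfl), hD2]
          congr 1
          abel
        · rw [hj, (show (5:ℕ) - 2 = 3 from rfl), (show (5:ℕ) - 1 = 4 from rfl),
            hDi 3 (by omega) (by omega) (by omega) (by omega) (by omega),
            hDi 4 (by omega) (by omega) (by omega) (by omega) (by omega),
            (show (3:ℕ) + 1 = 4 from rfl), (show (4:ℕ) + 1 = 5 from rfl), hD5]
          congr 1
          abel
        · have hjn : j.val < n := j.isLt
          have hjn3 : j.val ≤ n - 3 := by omega
          rw [hDi (j.val - 2) (by omega) (by omega) (by omega) (by omega) (by omega),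
            hDi (j.val - 1) (by omega) (by omega) (by omega) (by omega) (by omega),
            hDe j.val hj.1 hj.2 hjn,
            (by omega : j.val - 2 + 1 = j.val - 1),
            (by omega : j.val - 1 + 1 = j.val)]
          congr 1
          abel
      · simp only [if_neg hcond, map_zero]
    set N : Module.End (ZMod 2) V := f - D with hNdef
    have hNapp : ∀ x : V, N x = f x - D x := fun x => LinearMap.sub_apply f D x
    have hN0 : ∀ m : ℕ, m < n - 1 → m ≠ 2 → m ≠ 5 → ¬(6 ≤ m ∧ m % 4 = 1) →
        N (c m) = 0 := by
      intro m h0 h1 h2 h3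
      rw [hNapp, hfc m (by omega), hDi m (by omega) h1 h2 (by omega) h3, sub_self]
    have hN2 : N (c 2) = c 3 + c 0 := by
      rw [hNapp, hfc 2 (by omega), hD2, hsub]
    have hN5 : N (c 5) = c 6 + c 3 := by
      rw [hNapp, hfc 5 (by omega), hD5, hsub]
    have hNe : ∀ m : ℕ, 9 ≤ m → m % 4 = 1 → m < n →
        N (c m) = c (m + 1) + c (m - 2) := by
      intro m h1 h2 h3
      rw [hNapp, hfc m (by omega), hDe m h1 h2 h3, hsub]
    have hNlast : N (c (n - 1)) =
        (∑ j : Fin n, a j.val • c j.val) + (c (n - 2) + c (n - 1) + w) := by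
      rw [hNapp, hflast, hDlast, hsub]
    have hone : a (n - 1) = 1 := by
      rcases (by decide : ∀ x : ZMod 2, x = 0 ∨ x = 1) (a (n - 1)) with h | h
      · exact absurd h haz
      · exact h
    refine ⟨N, D, by rw [hNdef, sub_add_cancel], ?_, ?_⟩
    -- N ^ 2 = 0
    · refine b.ext (fun i => ?_)
      obtain ⟨m, hm⟩ := i
      rw [← hc m hm, pow_two, Module.End.mul_apply, LinearMap.zero_apply]
      by_cases hm2 : m = 2
      · rw [hm2, hN2, map_add, hN0 3 (by omega) (by omega) (by omega) (by omega),
          hN0 0 (by omega) (by omega) (by omega) (by omega), add_zero]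
      · by_cases hm5 : m = 5
        · rw [hm5, hN5, map_add, hN0 6 (by omega) (by omega) (by omega) (by omega),
            hN0 3 (by omega) (by omega) (by omega) (by omega), add_zero]
        · by_cases hmend : 6 ≤ m ∧ m % 4 = 1
          · rw [hNe m (by omega) hmend.2 hm, map_add,
              hN0 (m + 1) (by omega) (by omega) (by omega) (by omega),
              hN0 (m - 2) (by omega) (by omega) (by omega) (by omega), add_zero]
          · by_cases hml : m = n - 1
            · rw [hml, hNlast, map_add, map_sum]
              simp only [map_smul]
              rw [map_add, map_add,
                hN0 (n - 2) (by omega) (by omega) (by omega) (by omega), zero_add,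
                hwdef, map_sum]
              have hkey : (∑ j : Fin n, (a j.val • N (c j.val) + N (wt j)))
                  = N (c (n - 1)) := by
                rw [Finset.sum_eq_single (⟨n - 1, by omega⟩ : Fin n)]
                · simp only [hwtdef, Fin.val_mk]
                  rw [hone, one_smul,
                    if_neg (by omega :
                      ¬(n - 1 = 2 ∨ n - 1 = 5 ∨ (9 ≤ n - 1 ∧ (n - 1) % 4 = 1))),
                    map_zero, add_zero]
                · intro j _ hjne
                  have hjv : j.val ≠ n - 1 := by
                    intro hh
                    exact hjne (Fin.ext (by simpa using hh))
                  rw [hwtdef]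
                  by_cases hcond : (j.val = 2 ∨ j.val = 5 ∨ (9 ≤ j.val ∧ j.val % 4 = 1))
                  · simp only [if_pos hcond, map_smul, map_add]
                    rcases hcond with hj | hj | hj
                    · rw [hj, (show (2:ℕ) - 2 = 0 from rfl),
                        (show (2:ℕ) - 1 = 1 from rfl), hN2,
                        hN0 0 (by omega) (by omega) (by omega) (by omega),
                        hN0 1 (by omega) (by omega) (by omega) (by omega),
                        zero_add, zero_add, haa]
                    · rw [hj, (show (5:ℕ) - 2 = 3 from rfl),
                        (show (5:ℕ) - 1 = 4 from rfl), hN5,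
                        hN0 3 (by omega) (by omega) (by omega) (by omega),
                        hN0 4 (by omega) (by omega) (by omega) (by omega),
                        zero_add, zero_add, haa]
                    · have hjn : j.val < n := j.isLt
                      rw [hNe j.val hj.1 hj.2 hjn,
                        hN0 (j.val - 2) (by omega) (by omega) (by omega) (by omega),
                        hN0 (j.val - 1) (by omega) (by omega) (by omega) (by omega),
                        zero_add, zero_add, haa]
                  · simp only [if_neg hcond, map_zero, add_zero]
                    push_neg at hcond
                    rw [hN0 j.val (by omega) hcond.1 hcond.2.1 (by omega), smul_zero]
                · intro hmem
                  exact absurd (Finset.mem_univ _) hmem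
              have hsplit : (∑ j : Fin n, a j.val • N (c j.val))
                  + (∑ j : Fin n, N (wt j)) = N (c (n - 1)) := by
                rw [← Finset.sum_add_distrib]
                exact hkey
              rw [add_comm (N (c (n - 1))) (∑ j : Fin n, N (wt j)), ← add_assoc,
                hsplit, haa]
            · rw [hN0 m (by omega) hm2 hm5 hmend, map_zero]
    -- D ^ 4 = D
    · have hD4 : ∀ x : V, (D ^ 4) x = D (D (D (D x))) := by
        intro x
        rw [pow_succ, pow_succ, pow_succ, pow_one]
        simp only [Module.End.mul_apply]
      have hDs : D (c (n - 2) + c (n - 1) + w) = c (n - 2) := by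
        rw [map_add, map_add,
          hDi (n - 2) (by omega) (by omega) (by omega) (by omega) (by omega),
          (by omega : n - 2 + 1 = n - 1), hDlast, hDw]
        have hre : c (n - 1) + (c (n - 2) + c (n - 1) + w) + w
            = (c (n - 1) + c (n - 1)) + (c (n - 2) + (w + w)) := by abel
        rw [hre, haa, haa, zero_add, add_zero]
      refine b.ext (fun i => ?_)
      obtain ⟨m, hm⟩ := i
      rw [← hc m hm, hD4]
      by_cases hm2 : m = 2
      · rw [hm2, hD2, hDi 0 (by omega) (by omega) (by omega) (by omega) (by omega),
          (show (0:ℕ) + 1 = 1 from rfl),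
          hDi 1 (by omega) (by omega) (by omega) (by omega) (by omega),
          (show (1:ℕ) + 1 = 2 from rfl), hD2]
      · by_cases hm5 : m = 5
        · rw [hm5, hD5, hDi 3 (by omega) (by omega) (by omega) (by omega) (by omega),
            (show (3:ℕ) + 1 = 4 from rfl),
            hDi 4 (by omega) (by omega) (by omega) (by omega) (by omega),
            (show (4:ℕ) + 1 = 5 from rfl), hD5]
        · by_cases hm0 : m = 0
          · rw [hm0, hDi 0 (by omega) (by omega) (by omega) (by omega) (by omega),
              (show (0:ℕ) + 1 = 1 from rfl),
              hDi 1 (by omega) (by omega) (by omega) (by omega) (by omega),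
              (show (1:ℕ) + 1 = 2 from rfl), hD2,
              hDi 0 (by omega) (by omega) (by omega) (by omega) (by omega)]
          · by_cases hm1 : m = 1
            · rw [hm1, hDi 1 (by omega) (by omega) (by omega) (by omega) (by omega),
                (show (1:ℕ) + 1 = 2 from rfl), hD2,
                hDi 0 (by omega) (by omega) (by omega) (by omega) (by omega),
                (show (0:ℕ) + 1 = 1 from rfl),
                hDi 1 (by omega) (by omega) (by omega) (by omega) (by omega)]
            · by_cases hm3 : m = 3
              · rw [hm3, hDi 3 (by omega) (by omega) (by omega) (by omega) (by omega),
                  (show (3:ℕ) + 1 = 4 from rfl),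
                  hDi 4 (by omega) (by omega) (by omega) (by omega) (by omega),
                  (show (4:ℕ) + 1 = 5 from rfl), hD5,
                  hDi 3 (by omega) (by omega) (by omega) (by omega) (by omega)]
              · by_cases hm4 : m = 4
                · rw [hm4, hDi 4 (by omega) (by omega) (by omega) (by omega) (by omega),
                    (show (4:ℕ) + 1 = 5 from rfl), hD5,
                    hDi 3 (by omega) (by omega) (by omega) (by omega) (by omega),
                    (show (3:ℕ) + 1 = 4 from rfl),
                    hDi 4 (by omega) (by omega) (by omega) (by omega) (by omega)]
                · by_cases hml : m = n - 1
                  · rw [hml, hDlast, hDs,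
                      hDi (n - 2) (by omega) (by omega) (by omega) (by omega) (by omega),
                      (by omega : n - 2 + 1 = n - 1), hDlast]
                  · by_cases hml2 : m = n - 2
                    · rw [hml2,
                        hDi (n - 2) (by omega) (by omega) (by omega) (by omega) (by omega),
                        (by omega : n - 2 + 1 = n - 1), hDlast, hDs,
                        hDi (n - 2) (by omega) (by omega) (by omega) (by omega) (by omega),
                        (by omega : n - 2 + 1 = n - 1)]
                    -- now 6 ≤ m ≤ n - 3
                    · have hm6 : 6 ≤ m := by omega
                      have hm3' : m ≤ n - 3 := by omega
                      by_cases h41 : m % 4 = 1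
                      · rw [hDe m (by omega) h41 hm,
                          hDi (m - 2) (by omega) (by omega) (by omega) (by omega) (by omega),
                          (by omega : m - 2 + 1 = m - 1),
                          hDi (m - 1) (by omega) (by omega) (by omega) (by omega) (by omega),
                          (by omega : m - 1 + 1 = m),
                          hDe m (by omega) h41 hm]
                      · by_cases h42 : m % 4 = 2
                        · rw [hDi m hm (by omega) (by omega) (by omega) (by omega),
                            hDi (m + 1) (by omega) (by omega) (by omega) (by omega) (by omega),
                            (by omega : m + 1 + 1 = m + 2),
                            hDi (m + 2) (by omega) (by omega) (by omega) (by omega) (by omega),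
                            (by omega : m + 2 + 1 = m + 3),
                            hDe (m + 3) (by omega) (by omega) (by omega),
                            (by omega : m + 3 - 2 = m + 1)]
                        · by_cases h43 : m % 4 = 3
                          · rw [hDi m hm (by omega) (by omega) (by omega) (by omega),
                              hDi (m + 1) (by omega) (by omega) (by omega) (by omega) (by omega),
                              (by omega : m + 1 + 1 = m + 2),
                              hDe (m + 2) (by omega) (by omega) (by omega),
                              (by omega : m + 2 - 2 = m),
                              hDi m hm (by omega) (by omega) (by omega) (by omega)]
                          -- m % 4 = 0
                          · rw [hDi m hm (by omega) (by omega) (by omega) (by omega),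
                              hDe (m + 1) (by omega) (by omega) (by omega),
                              (by omega : m + 1 - 2 = m - 1),
                              hDi (m - 1) (by omega) (by omega) (by omega) (by omega) (by omega),
                              (by omega : m - 1 + 1 = m),
                              hDi m hm (by omega) (by omega) (by omega) (by omega)]

theorem stmt6 (k : ℕ) (hk : 2 ≤ k)
    (B : Matrix (Fin (4 * k)) (Fin (4 * k)) (ZMod 2)) (hB : Nonderogative B) :
    ∃ N D : Matrix (Fin (4 * k)) (Fin (4 * k)) (ZMod 2),
      B = N + D ∧ N ^ 2 = 0 ∧ D ^ 4 = D := by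
  unfold Nonderogative at hB
  set e := Matrix.toLinAlgEquiv' (R := ZMod 2) (n := Fin (4 * k)) with hedef
  set f : Module.End (ZMod 2) (Fin (4 * k) → ZMod 2) := e B with hfdef
  have hmin : minpoly (ZMod 2) f = minpoly (ZMod 2) B :=
    minpoly.algHom_eq e.toAlgHom e.injective B
  have hdeg : (minpoly (ZMod 2) f).natDegree = 4 * k := by
    rw [hmin, ← hB, Matrix.charpoly_natDegree_eq_dim, Fintype.card_fin]
  have hdim : Module.finrank (ZMod 2) (Fin (4 * k) → ZMod 2) = 4 * k :=
    Module.finrank_fin_fun _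
  obtain ⟨b, hb⟩ := exists_cyclic_basis f (by omega) hdim hdeg
  obtain ⟨N', D', h1, h2, h3⟩ := construction hk rfl f b hb
  refine ⟨e.symm N', e.symm D', ?_, ?_, ?_⟩
  · calc B = e.symm f := (e.symm_apply_apply B).symm
      _ = e.symm (N' + D') := by rw [← h1]
      _ = e.symm N' + e.symm D' := map_add _ _ _
  · rw [← map_pow, h2, map_zero]
  · rw [← map_pow, h3]
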